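/- (Law of large numbers for finite free multiplicative convolution.) Let p be a monic polynomial of degree d with only nonnegative real roots, with root multiset Λ, and let k be the number of zeros in Λ. For each n ≥ 1 let λ_1^(n) ≥ λ_2^(n) ≥ ... ≥ λ_d^(n) be the nonnegative real roots of p^{⊠_d n}. Then for every 1 ≤ i ≤ d−k, the sequence (λ_i^(n))^{1/n} converges to ẽ_i(Λ)/ẽ_{i−1}(Λ) as n → ∞, and for every d−k+1 ≤ i ≤ d one has λ_i^(n) = 0 for all n (so (λ_i^(n))^{1/n} → 0). -/

import Mathlib

open Polynomial Filter

/-- Finite free multiplicative convolution of two polynomials of degree `d`: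
for `p(x) = Σ (-1)^i p_i x^{d-i}` and `q(x) = Σ (-1)^i q_i x^{d-i}`,
`(p ⊠_d q)(x) = Σ (-1)^i (p_i q_i / binom(d,i)) x^{d-i}`. -/
noncomputable def ffmul (d : ℕ) (p q : Polynomial ℝ) : Polynomial ℝ :=
  ∑ i ∈ Finset.range (d + 1),
    Polynomial.C ((-1 : ℝ) ^ i * p.coeff (d - i) * q.coeff (d - i) / (d.choose i : ℝ)) *
      Polynomial.X ^ (d - i)

/-- `ffmulPow d p n` is the `n`-th finite free multiplicative convolution power `p^{⊠_d n}`
(for `n ≥ 1`); the convolution identity `(x-1)^d` is used as the 0-th power. -/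
noncomputable def ffmulPow (d : ℕ) (p : Polynomial ℝ) : ℕ → Polynomial ℝ
  | 0 => (Polynomial.X - 1) ^ d
  | n + 1 => ffmul d p (ffmulPow d p n)

/-- Normalized elementary symmetric function `ẽ_i(Λ) = e_i(Λ) / binom(d,i)`. -/
noncomputable def etilde (d i : ℕ) (Λ : Multiset ℝ) : ℝ :=
  Λ.esymm i / (d.choose i : ℝ)

lemma msprod_nonneg (s : Multiset ℝ) (h : ∀ x ∈ s, (0:ℝ) ≤ x) : 0 ≤ s.prod := by
  induction s using Multiset.induction with
  | empty => simp
  | cons a s ih =>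
    rw [Multiset.prod_cons]
    exact mul_nonneg (h a (Multiset.mem_cons_self a s))
      (ih fun x hx => h x (Multiset.mem_cons_of_mem hx))

lemma esymm_nonneg' (s : Multiset ℝ) (h : ∀ x ∈ s, (0:ℝ) ≤ x) (i : ℕ) : 0 ≤ s.esymm i := by
  apply Multiset.sum_nonneg
  intro x hx
  obtain ⟨t, ht, rfl⟩ := Multiset.mem_map.mp hx
  obtain ⟨hts, hc⟩ := (Multiset.mem_powersetCard).mp ht
  exact msprod_nonneg t fun y hy => h y (Multiset.mem_of_le hts hy)

lemma single_le_esymm {s t : Multiset ℝ} (h : ∀ x ∈ s, (0:ℝ) ≤ x) (hts : t ≤ s) {i : ℕ}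
    (hc : Multiset.card t = i) : t.prod ≤ s.esymm i := by
  apply Multiset.single_le_sum
  · intro x hx
    obtain ⟨u, hu, rfl⟩ := Multiset.mem_map.mp hx
    obtain ⟨hus, _⟩ := (Multiset.mem_powersetCard).mp hu
    exact msprod_nonneg u fun y hy => h y (Multiset.mem_of_le hus hy)
  · exact Multiset.mem_map.mpr ⟨t, (Multiset.mem_powersetCard).mpr ⟨hts, hc⟩, rfl⟩

lemma card_filter_ne (d k : ℕ) (Λ : Multiset ℝ) (hcard : Multiset.card Λ = d)
    (hk : Λ.count 0 = k) : Multiset.card (Λ.filter (fun x => x ≠ 0)) = d - k := by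
  have h1 : Λ.filter (fun x => x = 0) + Λ.filter (fun x => ¬ x = 0) = Λ :=
    Multiset.filter_add_not _ _
  have h2 : Multiset.card (Λ.filter (fun x => x = 0)) = k := by
    rw [← hk, Multiset.count_eq_card_filter_eq]
    congr 1
    exact Multiset.filter_congr fun x _ => by constructor <;> intro h <;> exact h.symm
  have h3 := congrArg Multiset.card h1
  rw [Multiset.card_add, h2, hcard] at h3
  have : Multiset.card (Λ.filter (fun x => ¬ x = 0)) = d - k := by omega
  simpa using this


lemma msprod_pos (s : Multiset ℝ) (h : ∀ x ∈ s, (0:ℝ) < x) : 0 < s.prod := by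
  induction s using Multiset.induction with
  | empty => simp
  | cons a s ih =>
    rw [Multiset.prod_cons]
    exact mul_pos (h a (Multiset.mem_cons_self a s))
      (ih fun x hx => h x (Multiset.mem_cons_of_mem hx))

lemma esymm_pos (d k : ℕ) (Λ : Multiset ℝ) (hcard : Multiset.card Λ = d)
    (hnonneg : ∀ x ∈ Λ, (0:ℝ) ≤ x) (hk : Λ.count 0 = k) {i : ℕ} (hi : i ≤ d - k) :
    0 < Λ.esymm i := by
  classical
  set F := Λ.filter (fun x => x ≠ 0) with hF
  have hcF : Multiset.card F = d - k := card_filter_ne d k Λ hcard hk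
  set t : Multiset ℝ := ↑(F.toList.take i) with ht
  have htF : t ≤ F := by
    conv_rhs => rw [← Multiset.coe_toList F]
    exact (List.take_sublist i F.toList).subperm
  have htc : Multiset.card t = i := by
    rw [ht, Multiset.coe_card, List.length_take, Multiset.length_toList, hcF]
    omega
  have htpos : ∀ x ∈ t, (0:ℝ) < x := by
    intro x hx
    have hxF : x ∈ F := Multiset.mem_of_le htF hx
    have := Multiset.of_mem_filter hxF
    have hxΛ : x ∈ Λ := Multiset.mem_of_mem_filter hxF
    exact lt_of_le_of_ne (hnonneg x hxΛ) (Ne.symm this)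
  calc (0:ℝ) < t.prod := msprod_pos t htpos
    _ ≤ Λ.esymm i := single_le_esymm hnonneg (le_trans htF (Multiset.filter_le _ _)) htc

lemma esymm_zero_of_gt (d k : ℕ) (Λ : Multiset ℝ) (hcard : Multiset.card Λ = d)
    (hk : Λ.count 0 = k) {i : ℕ} (hi : d - k < i) : Λ.esymm i = 0 := by
  classical
  rw [Multiset.esymm]
  apply Multiset.sum_eq_zero
  intro x hx
  obtain ⟨t, ht, rfl⟩ := Multiset.mem_map.mp hx
  obtain ⟨hts, hc⟩ := (Multiset.mem_powersetCard).mp ht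
  have h0 : (0:ℝ) ∈ t := by
    by_contra h0
    have : t ≤ Λ.filter (fun x => x ≠ 0) := by
      rw [Multiset.le_filter]
      exact ⟨hts, fun a ha => fun h => h0 (h ▸ ha)⟩
    have := Multiset.card_le_card this
    rw [hc, card_filter_ne d k Λ hcard hk] at this
    omega
  exact Multiset.prod_eq_zero h0


lemma coeff_ffmul (d : ℕ) (p q : Polynomial ℝ) {j : ℕ} (hj : j ≤ d) :
    (ffmul d p q).coeff (d - j)
      = (-1:ℝ)^j * p.coeff (d - j) * q.coeff (d - j) / (d.choose j : ℝ) := by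
  rw [ffmul, finset_sum_coeff]
  rw [Finset.sum_eq_single j]
  · rw [coeff_C_mul, coeff_X_pow, if_pos rfl, mul_one]
  · intro i hi hij
    rw [Finset.mem_range] at hi
    rw [coeff_C_mul, coeff_X_pow, if_neg (by omega), mul_zero]
  · intro h
    exact absurd (Finset.mem_range.mpr (by omega)) h

lemma coeff_ffmulPow (d : ℕ) (p : Polynomial ℝ) (Λ : Multiset ℝ)
    (hcard : Multiset.card Λ = d)
    (hp : p = (Λ.map fun r => Polynomial.X - Polynomial.C r).prod)
    (n : ℕ) {j : ℕ} (hj : j ≤ d) :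
    (ffmulPow d p n).coeff (d - j) = (-1:ℝ)^j * (d.choose j : ℝ) * (etilde d j Λ)^n := by
  have hchoose : (0:ℝ) < (d.choose j : ℝ) := by
    exact_mod_cast Nat.cast_pos.mpr (Nat.choose_pos hj)
  have hpc : p.coeff (d - j) = (-1:ℝ)^j * Λ.esymm j := by
    rw [hp, Multiset.prod_X_sub_C_coeff Λ (by omega : d - j ≤ Multiset.card Λ)]
    rw [hcard]
    congr 2 <;> omega
  induction n with
  | zero =>
    show ((X - 1 : Polynomial ℝ)^d).coeff (d - j) = _
    have : (X - 1 : Polynomial ℝ) = X + C (-1 : ℝ) := by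
      rw [map_neg, map_one]; ring
    rw [this, coeff_X_add_C_pow]
    have h1 : d - (d - j) = j := by omega
    rw [h1, Nat.choose_symm hj, pow_zero, mul_one]
  | succ n ih =>
    show (ffmul d p (ffmulPow d p n)).coeff (d - j) = _
    rw [coeff_ffmul d p _ hj, ih, hpc]
    have he : Λ.esymm j = (d.choose j : ℝ) * etilde d j Λ := by
      rw [etilde]; field_simp
    rw [he]
    rw [pow_succ]
    field_simp
    have hsign : ((-1:ℝ))^(j*3) = (-1)^j := by
      rw [pow_mul]
      have h3 : ((-1:ℝ)^j)^3 = ((-1:ℝ)^j)^2 * (-1)^j := by ring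
      rw [h3, ← pow_mul, mul_comm j 2, pow_mul]
      norm_num
    ring_nf
    rw [mul_comm j 2, pow_mul]; norm_num

lemma Icc_one_eq_image (i : ℕ) : Finset.Icc 1 i = Finset.image (· + 1) (Finset.range i) := by
  ext a
  simp only [Finset.mem_Icc, Finset.mem_image, Finset.mem_range]
  constructor
  · rintro ⟨h1, h2⟩; exact ⟨a - 1, by omega, by omega⟩
  · rintro ⟨b, hb, rfl⟩; omega

lemma prod_Icc_one (i : ℕ) (f : ℕ → ℝ) :
    ∏ a ∈ Finset.Icc 1 i, f a = ∏ t ∈ Finset.range i, f (t + 1) := by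
  rw [Icc_one_eq_image, Finset.prod_image]
  intro a _ b _ h
  simp only at h
  omega

lemma strictMono_lower {m : ℕ} (g : Fin m → ℕ) (hg : StrictMono g) (h1 : ∀ t, 1 ≤ g t) :
    ∀ t : Fin m, (t : ℕ) + 1 ≤ g t := by
  have key : ∀ j (h : j < m), j + 1 ≤ g ⟨j, h⟩ := by
    intro j
    induction j with
    | zero => intro h; exact h1 ⟨0, h⟩
    | succ j ih =>
      intro h
      have hj : j < m := Nat.lt_of_succ_lt h
      have h2 : g ⟨j, hj⟩ < g ⟨j + 1, h⟩ := hg (by simp [Fin.mk_lt_mk])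
      have := ih hj
      omega
  intro t
  simpa using key t.1 t.2

lemma topProd_le_esymm (d : ℕ) (f : ℕ → ℝ) (hf : ∀ i, 1 ≤ i → i ≤ d → 0 ≤ f i) {i : ℕ}
    (hi : i ≤ d) :
    ∏ t ∈ Finset.range i, f (t + 1) ≤ ((Finset.Icc 1 d).val.map f).esymm i := by
  rw [Finset.esymm_map_val]
  rw [← prod_Icc_one]
  apply Finset.single_le_sum (f := fun A => ∏ a ∈ A, f a)
  · intro A hA
    obtain ⟨hAs, _⟩ := Finset.mem_powersetCard.mp hA
    exact Finset.prod_nonneg fun a ha => by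
      have := Finset.mem_Icc.mp (hAs ha); exact hf a this.1 this.2
  · apply Finset.mem_powersetCard.mpr
    refine ⟨Finset.Icc_subset_Icc_right hi, ?_⟩
    simp

lemma esymm_le_topProd (d : ℕ) (f : ℕ → ℝ) (hf : ∀ i, 1 ≤ i → i ≤ d → 0 ≤ f i)
    (hmono : ∀ i j, 1 ≤ i → i ≤ j → j ≤ d → f j ≤ f i) {i : ℕ} (hi : i ≤ d) :
    ((Finset.Icc 1 d).val.map f).esymm i ≤ (d.choose i : ℝ) * ∏ t ∈ Finset.range i, f (t + 1) := by
  rw [Finset.esymm_map_val]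
  have hbound : ∀ A ∈ (Finset.Icc 1 d).powersetCard i,
      ∏ a ∈ A, f a ≤ ∏ t ∈ Finset.range i, f (t + 1) := by
    intro A hA
    obtain ⟨hAs, hAc⟩ := Finset.mem_powersetCard.mp hA
    set e := A.orderEmbOfFin hAc with he
    have hemem : ∀ t, e t ∈ Finset.Icc 1 d := fun t => hAs (A.orderEmbOfFin_mem hAc t)
    have hlow : ∀ t : Fin i, (t : ℕ) + 1 ≤ e t :=
      strictMono_lower _ (OrderEmbedding.strictMono e)
        (fun t => (Finset.mem_Icc.mp (hemem t)).1)
    have hAimg : A = Finset.image (fun t => e t) Finset.univ := by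
      ext a
      simp only [Finset.mem_image, Finset.mem_univ, true_and]
      constructor
      · intro ha
        have : a ∈ Set.range e := (A.range_orderEmbOfFin hAc) ▸ ha
        obtain ⟨t, ht⟩ := this
        exact ⟨t, ht⟩
      · rintro ⟨t, rfl⟩
        exact A.orderEmbOfFin_mem hAc t
    rw [hAimg, Finset.prod_image (fun a _ b _ h => e.injective h)]
    rw [← Fin.prod_univ_eq_prod_range (fun t => f (t + 1)) i]
    apply Finset.prod_le_prod
    · intro t _
      have := Finset.mem_Icc.mp (hemem t)
      exact hf _ this.1 this.2
    · intro t _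
      exact hmono ((t : ℕ) + 1) (e t) (by omega) (hlow t) (Finset.mem_Icc.mp (hemem t)).2
  calc ∑ A ∈ (Finset.Icc 1 d).powersetCard i, ∏ a ∈ A, f a
      ≤ ∑ _A ∈ (Finset.Icc 1 d).powersetCard i, ∏ t ∈ Finset.range i, f (t + 1) :=
        Finset.sum_le_sum hbound
    _ = (d.choose i : ℝ) * ∏ t ∈ Finset.range i, f (t + 1) := by
        rw [Finset.sum_const, Finset.card_powersetCard, Nat.card_Icc]
        simp [nsmul_eq_mul]

lemma esymm_roots (d : ℕ) (p : Polynomial ℝ) (Λ : Multiset ℝ) (lam : ℕ → ℕ → ℝ)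
    (hcard : Multiset.card Λ = d)
    (hp : p = (Λ.map fun r => Polynomial.X - Polynomial.C r).prod)
    (n : ℕ)
    (hroots : ffmulPow d p n = ∏ i ∈ Finset.Icc 1 d, (X - C (lam n i)))
    {j : ℕ} (hj : j ≤ d) :
    ((Finset.Icc 1 d).val.map (lam n)).esymm j = (d.choose j : ℝ) * (etilde d j Λ) ^ n := by
  set M : Multiset ℝ := (Finset.Icc 1 d).val.map (lam n) with hM
  have hcM : Multiset.card M = d := by
    rw [hM, Multiset.card_map, ← Finset.card_def]
    simp [Nat.card_Icc]
  have hprod : (∏ i ∈ Finset.Icc 1 d, (X - C (lam n i))) = (M.map fun r => X - C r).prod := by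
    rw [hM, Multiset.map_map]
    rfl
  have h1 : (ffmulPow d p n).coeff (d - j) = (-1:ℝ)^j * M.esymm j := by
    rw [hroots, hprod, Multiset.prod_X_sub_C_coeff M (by omega : d - j ≤ Multiset.card M), hcM]
    congr 2 <;> omega
  have h2 := coeff_ffmulPow d p Λ hcard hp n hj
  rw [h1] at h2
  have hne : ((-1:ℝ)^j) ≠ 0 := pow_ne_zero _ (by norm_num)
  have := mul_left_cancel₀ hne (by rw [h2]; ring : (-1:ℝ)^j * M.esymm j = (-1:ℝ)^j * ((d.choose j : ℝ) * (etilde d j Λ) ^ n))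
  exact this

lemma tendsto_rpow_one_div_nat (c : ℝ) (hc : 0 < c) :
    Tendsto (fun n : ℕ => c ^ (1/(n:ℝ))) atTop (nhds 1) := by
  have h : ∀ n : ℕ, c ^ (1/(n:ℝ)) = Real.exp (Real.log c * (1/(n:ℝ))) := by
    intro n; rw [Real.rpow_def_of_pos hc]
  simp_rw [h]
  have h2 : Tendsto (fun n : ℕ => Real.log c * (1/(n:ℝ))) atTop (nhds 0) := by
    have := (tendsto_one_div_atTop_nhds_zero_nat : Tendsto (fun n : ℕ => 1 / (n:ℝ)) atTop (nhds 0))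
    simpa using this.const_mul (Real.log c)
  have h3 := (Real.continuous_exp.tendsto 0).comp h2
  simpa [Function.comp_def] using h3


/-- LLN for finite free multiplicative convolution. -/
theorem lln_ffmulPow (d k : ℕ) (p : Polynomial ℝ) (Λ : Multiset ℝ) (lam : ℕ → ℕ → ℝ)
    (hcard : Multiset.card Λ = d) (hnonneg : ∀ x ∈ Λ, (0 : ℝ) ≤ x)
    (hp : p = (Λ.map fun r => Polynomial.X - Polynomial.C r).prod)
    (hk : Λ.count 0 = k)
    (hroots : ∀ n, 1 ≤ n → ffmulPow d p n
        = ∏ i ∈ Finset.Icc 1 d, (Polynomial.X - Polynomial.C (lam n i)))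
    (hmono : ∀ n, 1 ≤ n → ∀ i j, 1 ≤ i → i ≤ j → j ≤ d → lam n j ≤ lam n i)
    (hnneg : ∀ n, 1 ≤ n → ∀ i, 1 ≤ i → i ≤ d → 0 ≤ lam n i) :
    (∀ i, 1 ≤ i → i ≤ d - k →
      Filter.Tendsto (fun n : ℕ => (lam n i) ^ (1 / (n : ℝ))) Filter.atTop
        (nhds (etilde d i Λ / etilde d (i - 1) Λ))) ∧
    (∀ i, d - k + 1 ≤ i → i ≤ d → ∀ n, 1 ≤ n → lam n i = 0) ∧
    (∀ i, d - k + 1 ≤ i → i ≤ d →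
      Filter.Tendsto (fun n : ℕ => (lam n i) ^ (1 / (n : ℝ))) Filter.atTop (nhds 0)) := by
  -- basic facts
  have hEpos : ∀ j, j ≤ d - k → 0 < etilde d j Λ := by
    intro j hj
    have hjd : j ≤ d := le_trans hj (Nat.sub_le d k)
    exact div_pos (esymm_pos d k Λ hcard hnonneg hk hj)
      (by exact_mod_cast Nat.choose_pos hjd)
  -- upper and lower bounds for the top products
  set T : ℕ → ℕ → ℝ := fun n j => ∏ t ∈ Finset.range j, lam n (t + 1) with hT
  have hTub : ∀ n, 1 ≤ n → ∀ j, j ≤ d →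
      T n j ≤ (d.choose j : ℝ) * (etilde d j Λ) ^ n := by
    intro n hn j hj
    rw [← esymm_roots d p Λ lam hcard hp n (hroots n hn) hj]
    exact topProd_le_esymm d (lam n) (hnneg n hn) hj
  have hTlb : ∀ n, 1 ≤ n → ∀ j, j ≤ d → (etilde d j Λ) ^ n ≤ T n j := by
    intro n hn j hj
    have h1 : ((Finset.Icc 1 d).val.map (lam n)).esymm j ≤ (d.choose j : ℝ) * T n j :=
      esymm_le_topProd d (lam n) (hnneg n hn) (hmono n hn) hj
    rw [esymm_roots d p Λ lam hcard hp n (hroots n hn) hj] at h1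
    have hcpos : (0:ℝ) < (d.choose j : ℝ) := by exact_mod_cast Nat.choose_pos hj
    exact le_of_mul_le_mul_left h1 hcpos
  -- part 2
  have part2 : ∀ i, d - k + 1 ≤ i → i ≤ d → ∀ n, 1 ≤ n → lam n i = 0 := by
    intro i hi1 hi2 n hn
    by_contra h
    have hpos : 0 < lam n i := lt_of_le_of_ne (hnneg n hn i (by omega) hi2) (Ne.symm h)
    have hTpos : 0 < T n i := by
      apply Finset.prod_pos
      intro t ht
      rw [Finset.mem_range] at ht
      calc (0:ℝ) < lam n i := hpos
        _ ≤ lam n (t + 1) := hmono n hn (t + 1) i (by omega) (by omega) hi2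
    have hE0 : etilde d i Λ = 0 := by
      rw [etilde, esymm_zero_of_gt d k Λ hcard hk (by omega), zero_div]
    have := hTub n hn i hi2
    rw [hE0, zero_pow (by omega : n ≠ 0), mul_zero] at this
    linarith
  refine ⟨?_, part2, ?_⟩
  · -- part 1
    intro i hi1 hi2
    have hid : i ≤ d := le_trans hi2 (Nat.sub_le d k)
    have hi1d : i - 1 ≤ d := by omega
    have hEi : 0 < etilde d i Λ := hEpos i hi2
    have hEj : 0 < etilde d (i-1) Λ := hEpos (i-1) (by omega)
    set Ei := etilde d i Λ
    set Ej := etilde d (i-1) Λ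
    set L := Ei / Ej with hL
    have hLpos : 0 < L := div_pos hEi hEj
    have hC1 : (0:ℝ) < (d.choose (i-1) : ℝ) := by exact_mod_cast Nat.choose_pos hi1d
    have hC2 : (0:ℝ) < (d.choose i : ℝ) := by exact_mod_cast Nat.choose_pos hid
    set C1 := (d.choose (i-1) : ℝ)
    set C2 := (d.choose i : ℝ)
    -- bounds on lam n i for n ≥ 1
    have key : ∀ n, 1 ≤ n →
        (1/C1) * L ^ n ≤ lam n i ∧ lam n i ≤ C2 * L ^ n := by
      intro n hn
      have hsplit : T n (i-1) * lam n i = T n i := by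
        have h' : i - 1 + 1 = i := by omega
        have := Finset.prod_range_succ (fun t => lam n (t + 1)) (i - 1)
        rw [h'] at this
        exact this.symm
      have hT1pos : 0 < T n (i-1) :=
        lt_of_lt_of_le (pow_pos hEj n) (hTlb n hn (i-1) hi1d)
      have hlam : lam n i = T n i / T n (i-1) := by
        rw [← hsplit, mul_div_cancel_left₀ _ (ne_of_gt hT1pos)]
      constructor
      · rw [hlam]
        have h1 : Ei ^ n ≤ T n i := hTlb n hn i hid
        have h2 : T n (i-1) ≤ C1 * Ej ^ n := hTub n hn (i-1) hi1d
        have heq : (1/C1) * L ^ n = Ei ^ n / (C1 * Ej ^ n) := by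
          rw [hL, div_pow]
          field_simp
        rw [heq]
        apply div_le_div₀ (le_trans (le_of_lt (pow_pos hEi n)) h1) h1 hT1pos h2
      · rw [hlam]
        have h1 : T n i ≤ C2 * Ei ^ n := hTub n hn i hid
        have h2 : Ej ^ n ≤ T n (i-1) := hTlb n hn (i-1) hi1d
        have heq : C2 * L ^ n = (C2 * Ei ^ n) / Ej ^ n := by
          rw [hL, div_pow]
          field_simp
        rw [heq]
        exact div_le_div₀ (by positivity) h1 (pow_pos hEj n) h2
    -- root identity: (L^n)^(1/n) = L
    have hroot : ∀ n : ℕ, 1 ≤ n → (L ^ n) ^ (1/(n:ℝ)) = L := by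
      intro n hn
      have hne : (n:ℝ) ≠ 0 := by positivity
      rw [← Real.rpow_natCast L n, ← Real.rpow_mul hLpos.le, mul_one_div_cancel hne,
        Real.rpow_one]
    -- squeeze
    have hlo : Tendsto (fun n : ℕ => (1/C1) ^ (1/(n:ℝ)) * L) atTop (nhds L) := by
      have := (tendsto_rpow_one_div_nat (1/C1) (by positivity)).mul_const L
      simpa using this
    have hup : Tendsto (fun n : ℕ => C2 ^ (1/(n:ℝ)) * L) atTop (nhds L) := by
      have := (tendsto_rpow_one_div_nat C2 hC2).mul_const L
      simpa using this
    have hgoal : Tendsto (fun n : ℕ => (lam n i) ^ (1/(n:ℝ))) atTop (nhds L) := by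
      apply tendsto_of_tendsto_of_tendsto_of_le_of_le' hlo hup
      · filter_upwards [eventually_ge_atTop 1] with n hn
        have hb := (key n hn).1
        have hnn : (0:ℝ) ≤ 1/(n:ℝ) := by positivity
        calc (1/C1) ^ (1/(n:ℝ)) * L
            = ((1/C1) * L ^ n) ^ (1/(n:ℝ)) := by
              rw [Real.mul_rpow (by positivity) (by positivity), hroot n hn]
          _ ≤ (lam n i) ^ (1/(n:ℝ)) := Real.rpow_le_rpow (by positivity) hb hnn
      · filter_upwards [eventually_ge_atTop 1] with n hn
        have hb := (key n hn).2
        have hnn : (0:ℝ) ≤ 1/(n:ℝ) := by positivity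
        have hlamnn : 0 ≤ lam n i := hnneg n hn i (by omega) hid
        calc (lam n i) ^ (1/(n:ℝ))
            ≤ (C2 * L ^ n) ^ (1/(n:ℝ)) := Real.rpow_le_rpow hlamnn hb hnn
          _ = C2 ^ (1/(n:ℝ)) * L := by
              rw [Real.mul_rpow (by positivity) (by positivity), hroot n hn]
    exact hgoal
  · -- part 3
    intro i hi1 hi2
    have heq : ∀ᶠ n in atTop, (0:ℝ) = (lam n i) ^ (1/(n:ℝ)) := by
      filter_upwards [eventually_ge_atTop 1] with n hn
      rw [part2 i hi1 hi2 n hn, Real.zero_rpow]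
      positivity
    exact (tendsto_const_nhds : Tendsto (fun _ : ℕ => (0:ℝ)) atTop (nhds 0)).congr' heq
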